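/- Let (X,d) be a metric space whose underlying set X is finite and nonempty, let T be a tree on X, and let w assign a positive length to each edge of T. Suppose T realises d, i.e., for all x,y ∈ X, d(x,y) equals the sum of w over the edges of the unique path in T joining x and y. Then the edge set of T is exactly the set of basic edges of (X,d), and w({a,b}) = d(a,b) for every edge {a,b} of T. In particular, T is the unique positively weighted fully labelled tree on X realising d. -/

import Mathlib

/-- A chain of intermediate points witnessing that the pair `{x, x'}` is non-basic:
`k ≥ 1` pairwise distinct intermediate points, each different from `x` and `x'`,
along which the distances sum to `dist x x'`. -/
def IsNonBasicChain {X : Type*} [MetricSpace X] (x x' : X) : Prop :=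
  ∃ (k : ℕ) (p : Fin (k + 2) → X), 1 ≤ k ∧ Function.Injective p ∧
    p 0 = x ∧ p (Fin.last (k + 1)) = x' ∧
    dist x x' = ∑ i : Fin (k + 1), dist (p i.castSucc) (p i.succ)

/-- The unordered pair `{x, x'}` is a non-basic edge. -/
def IsNonBasicEdge {X : Type*} [MetricSpace X] (x x' : X) : Prop :=
  IsNonBasicChain x x' ∨ IsNonBasicChain x' x

/-- The unordered pair `{x, x'}` is a basic edge. -/
def IsBasicEdge {X : Type*} [MetricSpace X] (x x' : X) : Prop :=
  x ≠ x' ∧ ¬ IsNonBasicEdge x x'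

open SimpleGraph

section AuxTree

variable {X : Type*} [MetricSpace X] {T : SimpleGraph X}

lemma RTaux.getVert_mem_support {u v : X} (W : T.Walk u v) (n : ℕ) :
    W.getVert n ∈ W.support := by
  rcases le_or_gt n W.length with h | h
  · exact SimpleGraph.Walk.mem_support_iff_exists_getVert.2 ⟨n, rfl, h⟩
  · rw [W.getVert_of_length_le h.le]
    exact W.end_mem_support

lemma RTaux.isPath_getVert_inj {u v : X} {W : T.Walk u v} (hW : W.IsPath) :
    ∀ i j, i ≤ W.length → j ≤ W.length → W.getVert i = W.getVert j → i = j := by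
  induction W with
  | nil => intro i j hi hj _; simp_all
  | cons h W ih =>
    intro i j hi hj hij
    rw [SimpleGraph.Walk.cons_isPath_iff] at hW
    match i, j with
    | 0, 0 => rfl
    | 0, j + 1 =>
      exfalso
      rw [SimpleGraph.Walk.getVert_zero, SimpleGraph.Walk.getVert_cons_succ] at hij
      exact hW.2 (hij ▸ RTaux.getVert_mem_support W j)
    | i + 1, 0 =>
      exfalso
      rw [SimpleGraph.Walk.getVert_zero, SimpleGraph.Walk.getVert_cons_succ] at hij
      exact hW.2 (hij ▸ RTaux.getVert_mem_support W i)
    | i + 1, j + 1 =>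
      rw [SimpleGraph.Walk.getVert_cons_succ, SimpleGraph.Walk.getVert_cons_succ] at hij
      simp only [SimpleGraph.Walk.length_cons, Nat.add_le_add_iff_right] at hi hj
      exact congrArg (· + 1) (ih hW.1 i j hi hj hij)

lemma RTaux.edges_map_sum_eq (w : Sym2 X → ℝ) : ∀ {u v : X} (W : T.Walk u v),
    (W.edges.map w).sum
      = ∑ i ∈ Finset.range W.length, w s(W.getVert i, W.getVert (i + 1)) := by
  intro u v W
  induction W with
  | nil => simp
  | @cons u u' v h W ih =>
    rw [SimpleGraph.Walk.edges_cons, List.map_cons, List.sum_cons, ih,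
      SimpleGraph.Walk.length_cons, Finset.sum_range_succ']
    simp only [SimpleGraph.Walk.getVert_cons_succ, SimpleGraph.Walk.getVert_zero]
    rw [add_comm]

variable (w : Sym2 X → ℝ)
variable (hrealise : ∀ (x y : X) (W : T.Walk x y), W.IsPath →
      (W.edges.map w).sum = dist x y)

include hrealise

/-- The weight of an edge equals the distance between its endpoints. -/
lemma RTaux.w_eq {a b : X} (h : T.Adj a b) : w s(a, b) = dist a b := by
  have hp : (SimpleGraph.Walk.cons h SimpleGraph.Walk.nil).IsPath := by simp [h.ne]
  have := hrealise a b _ hp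
  simpa using this

/-- There is a path from `a` to `b` whose weight sum is `dist a b`. -/
lemma RTaux.exists_path (hc : T.Connected) (a b : X) :
    ∃ P : T.Walk a b, P.IsPath ∧ (P.edges.map w).sum = dist a b := by
  classical
  obtain ⟨W⟩ := hc.preconnected a b
  exact ⟨W.bypass, W.bypass_isPath, hrealise a b _ W.bypass_isPath⟩

/-- Concatenating tree paths along a chain of points. -/
lemma RTaux.exists_chain_walk (hc : T.Connected) :
    ∀ (n : ℕ) (q : Fin (n + 1) → X),
    ∃ W : T.Walk (q 0) (q (Fin.last n)),
      (W.edges.map w).sum = ∑ i : Fin n, dist (q i.castSucc) (q i.succ) ∧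
      ∀ i, q i ∈ W.support := by
  intro n
  induction n with
  | zero =>
    intro q
    refine ⟨SimpleGraph.Walk.nil.copy rfl (congrArg q (by ext; simp)), by simp, ?_⟩
    intro i
    have : i = 0 := by ext; simp
    subst this
    simp
  | succ n ih =>
    intro q
    obtain ⟨W₁, hsum₁, hmem₁⟩ := ih (q ∘ Fin.castSucc)
    obtain ⟨P, hP, hPsum⟩ :=
      RTaux.exists_path w hrealise hc (q (Fin.last n).castSucc) (q (Fin.last (n + 1)))
    refine ⟨(W₁.append P).copy (congrArg q Fin.castSucc_zero) rfl, ?_, ?_⟩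
    · rw [SimpleGraph.Walk.edges_copy, SimpleGraph.Walk.edges_append, List.map_append,
        List.sum_append, hsum₁, hPsum, Fin.sum_univ_castSucc]
      rw [Fin.succ_last]
      simp only [Function.comp_apply, Fin.succ_castSucc]
    · intro i
      rw [SimpleGraph.Walk.support_copy, SimpleGraph.Walk.mem_support_append_iff]
      rcases Fin.eq_castSucc_or_eq_last i with ⟨j, rfl⟩ | rfl
      · exact Or.inl (hmem₁ j)
      · exact Or.inr P.end_mem_support

/-- An edge of the tree admits no non-basic chain. -/
lemma RTaux.no_chain (hT : T.IsTree) (hw : ∀ e ∈ T.edgeSet, 0 < w e)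
    {x x' : X} (h : T.Adj x x') : ¬ IsNonBasicChain x x' := by
  classical
  rintro ⟨k, p, hk, hinj, hp0, hpl, hsum⟩
  obtain ⟨W₀, hWsum, hWmem⟩ := RTaux.exists_chain_walk w hrealise hT.isConnected (k + 1) p
  set W : T.Walk x x' := W₀.copy hp0 hpl with hW
  have hWsum' : (W.edges.map w).sum = dist x x' := by
    rw [hW, SimpleGraph.Walk.edges_copy, hWsum, hsum]
  -- the single-edge path
  have hedge : w s(x, x') = dist x x' := RTaux.w_eq w hrealise h
  -- uniqueness of paths in a tree
  obtain ⟨P₀, _, huniq⟩ := hT.existsUnique_path x x'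
  have hB : W.bypass = SimpleGraph.Walk.cons h SimpleGraph.Walk.nil := by
    rw [huniq W.bypass W.bypass_isPath,
      huniq (SimpleGraph.Walk.cons h SimpleGraph.Walk.nil) (by simp [h.ne])]
  have hBedges : W.bypass.edges = [s(x, x')] := by rw [hB]; simp
  -- multiset comparison
  have hle : (W.bypass.edges : Multiset (Sym2 X)) ≤ (W.edges : Multiset (Sym2 X)) := by
    rw [Multiset.le_iff_count]
    intro e
    rcases Nat.eq_zero_or_pos (Multiset.count e (W.bypass.edges : Multiset (Sym2 X))) with h0 | h0
    · simp [h0]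
    · have hmem : e ∈ W.bypass.edges := by
        rw [← Multiset.mem_coe]; exact Multiset.count_pos.1 h0
      have h1 : Multiset.count e (W.bypass.edges : Multiset (Sym2 X)) ≤ 1 := by
        rw [Multiset.coe_count]
        exact List.nodup_iff_count_le_one.1 W.bypass_isPath.isTrail.edges_nodup e
      have h2 : 1 ≤ Multiset.count e (W.edges : Multiset (Sym2 X)) :=
        Multiset.one_le_count_iff_mem.2 (W.edges_bypass_subset hmem)
      omega
  obtain ⟨u, hu⟩ := Multiset.le_iff_exists_add.1 hle
  -- weight of the extra edges is zero
  have husum : (u.map w).sum = 0 := by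
    have h1 : ((W.edges : Multiset (Sym2 X)).map w).sum = dist x x' := by
      rw [Multiset.map_coe, Multiset.sum_coe]; exact hWsum'
    have h2 : ((W.bypass.edges : Multiset (Sym2 X)).map w).sum = dist x x' := by
      rw [Multiset.map_coe, Multiset.sum_coe, hBedges]; simpa using hedge
    rw [hu, Multiset.map_add, Multiset.sum_add, h2] at h1
    linarith
  have hu0 : u = 0 := by
    by_contra hu0
    obtain ⟨a, ha⟩ := Multiset.exists_mem_of_ne_zero hu0
    obtain ⟨u', rfl⟩ := Multiset.exists_cons_of_mem ha
    have hwa : 0 < w a := by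
      refine hw a (W.edges_subset_edgeSet ?_)
      rw [← Multiset.mem_coe, hu]
      exact Multiset.mem_add.2 (Or.inr (Multiset.mem_cons_self a u'))
    have hnn : 0 ≤ (u'.map w).sum := by
      refine Multiset.sum_nonneg fun b hb => ?_
      obtain ⟨c, hc, rfl⟩ := Multiset.mem_map.1 hb
      refine le_of_lt (hw c (W.edges_subset_edgeSet ?_))
      rw [← Multiset.mem_coe, hu]
      exact Multiset.mem_add.2 (Or.inr (Multiset.mem_cons_of_mem hc))
    rw [Multiset.map_cons, Multiset.sum_cons] at husum
    linarith
  -- hence W has length 1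
  have hlen : W.length = 1 := by
    have hcard := congrArg Multiset.card hu
    rw [hu0, add_zero] at hcard
    have h2 : W.edges.length = 1 := by simpa [hBedges] using hcard
    rw [← SimpleGraph.Walk.length_edges]; exact h2
  -- but p 1 is an interior point of W
  have hmem1 : p 1 ∈ W.support := by
    rw [hW, SimpleGraph.Walk.support_copy]; exact hWmem 1
  obtain ⟨m, hm, hmle⟩ := SimpleGraph.Walk.mem_support_iff_exists_getVert.1 hmem1
  rw [hlen] at hmle
  interval_cases m
  · rw [SimpleGraph.Walk.getVert_zero] at hm
    have h10 : (1 : Fin (k + 2)) = 0 := hinj (by rw [hp0, hm])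
    exact absurd h10 (by simp [Fin.ext_iff])
  · have hm' : W.getVert W.length = p 1 := by rw [hlen]; exact hm
    rw [SimpleGraph.Walk.getVert_length] at hm'
    rename_i hm''
    clear hm
    have hm := hm'
    have h1l : (1 : Fin (k + 2)) = Fin.last (k + 1) := hinj (by rw [hpl, hm])
    have : (1 : ℕ) = k + 1 := by simpa [Fin.ext_iff] using h1l
    omega



/-- If `a ≠ b` are not adjacent, the interior of the tree path gives a non-basic chain. -/
lemma RTaux.chain_of_not_adj (hT : T.IsTree) {a b : X} (hne : a ≠ b) (hna : ¬ T.Adj a b) :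
    IsNonBasicChain a b := by
  classical
  obtain ⟨P, hP, hPsum⟩ := RTaux.exists_path w hrealise hT.isConnected a b
  have h0 : P.length ≠ 0 := fun h => hne (SimpleGraph.Walk.eq_of_length_eq_zero h)
  have h1 : P.length ≠ 1 := by
    intro h
    apply hna
    have := P.adj_getVert_succ (i := 0) (by omega)
    rwa [SimpleGraph.Walk.getVert_zero, show (0 + 1) = P.length from h.symm,
      SimpleGraph.Walk.getVert_length] at this
  obtain ⟨k, hk, hk2⟩ : ∃ k, 1 ≤ k ∧ P.length = k + 1 :=
    ⟨P.length - 1, by omega, by omega⟩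
  refine ⟨k, fun i => P.getVert i, hk, ?_, ?_, ?_, ?_⟩
  · intro i j hij
    exact Fin.ext (RTaux.isPath_getVert_inj hP i j (by omega) (by omega) hij)
  · exact P.getVert_zero
  · show P.getVert (k + 1) = b
    rw [← hk2, SimpleGraph.Walk.getVert_length]
  · rw [← hPsum, RTaux.edges_map_sum_eq, hk2, ← Fin.sum_univ_eq_sum_range]
    refine Finset.sum_congr rfl fun i _ => ?_
    have hadj : T.Adj (P.getVert i.val) (P.getVert (i.val + 1)) :=
      P.adj_getVert_succ (by omega)
    have := RTaux.w_eq w hrealise hadj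
    simp only [Fin.coe_castSucc, Fin.val_succ]
    exact this

end AuxTree

/-- If a positively weighted tree `T` on `X` realises the metric `d` (the path metric
of `(T, w)` equals `d`), then the edges of `T` are exactly the basic edges of `(X, d)`
and the weight of each edge `{a, b}` is `dist a b`; in particular `T` is the unique
positively weighted fully labelled tree on `X` realising `d`. -/
theorem realising_tree_is_basic_geodesic_graph
    {X : Type*} [MetricSpace X] [Fintype X] [Nonempty X]
    (T : SimpleGraph X) (hT : T.IsTree) (w : Sym2 X → ℝ)
    (hw : ∀ e ∈ T.edgeSet, 0 < w e)
    (hrealise : ∀ (x y : X) (W : T.Walk x y), W.IsPath →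
      (W.edges.map w).sum = dist x y) :
    (∀ a b : X, T.Adj a b ↔ IsBasicEdge a b) ∧
    (∀ a b : X, T.Adj a b → w s(a, b) = dist a b) := by
  constructor
  · intro a b
    constructor
    · intro h
      refine ⟨h.ne, fun hnb => ?_⟩
      rcases hnb with hc | hc
      · exact RTaux.no_chain w hrealise hT hw h hc
      · exact RTaux.no_chain w hrealise hT hw h.symm hc
    · rintro ⟨hne, hnb⟩
      by_contra hna
      exact hnb (Or.inl (RTaux.chain_of_not_adj w hrealise hT hne hna))
  · intro a b h
    exact RTaux.w_eq w hrealise h
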